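/- The tpCN proposal density from x to x' is κ_t(x, x') = (γ₁/ρ^d)((d+ν)/(ν+⟨x,x⟩_s))^{d/2} [1 + (ρ²(ν+⟨x,x⟩_s))^{-1}(⟨x',x'⟩_s + (1−ρ²)⟨x,x⟩_s − 2√(1−ρ²)⟨x,x'⟩_s)]^{−(2d+ν)/2}, for a normalizing constant γ₁ depending only on d, ν, and C_s. -/

import Mathlib

open Matrix Real MeasureTheory

/-- Multivariate Gaussian density with mean `m` and covariance `S` on `ℝ^d`. -/
noncomputable def gaussPdf (d : ℕ) (m : Fin d → ℝ) (S : Matrix (Fin d) (Fin d) ℝ)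
    (x : Fin d → ℝ) : ℝ :=
  (Real.sqrt ((2 * Real.pi) ^ d * S.det))⁻¹ *
    Real.exp (-(1 / 2) * ((x - m) ⬝ᵥ (S⁻¹ *ᵥ (x - m))))

/-- The inner product `⟨x₁, x₂⟩_s = (x₁ − μ_s)ᵀ C_s⁻¹ (x₂ − μ_s)`. -/
noncomputable def innerS (d : ℕ) (μs : Fin d → ℝ) (Cs : Matrix (Fin d) (Fin d) ℝ)
    (x₁ x₂ : Fin d → ℝ) : ℝ :=
  (x₁ - μs) ⬝ᵥ (Cs⁻¹ *ᵥ (x₂ - μs))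

/-- Density of `Z` when `Z⁻¹ ∼ Gamma(shape k, scale θ)`. -/
noncomputable def invGammaPdf (k θ z : ℝ) : ℝ :=
  if 0 < z then z ^ (-(k + 1)) * Real.exp (-1 / (θ * z)) / (Real.Gamma k * θ ^ k) else 0

/-- The tpCN proposal density from `x` to `x'`: a scale mixture of Gaussians, the
proposal being `x' = μ_s + √(1−ρ²)(x−μ_s) + ρ√Z W` with
`Z⁻¹ ∼ Gamma((d+ν)/2, 2/(ν+⟨x,x⟩_s))` and `W ∼ N(0, C_s)`. -/
noncomputable def tpcnPdf (d : ℕ) (ν : ℝ) (μs : Fin d → ℝ)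
    (Cs : Matrix (Fin d) (Fin d) ℝ) (ρ : ℝ) (x x' : Fin d → ℝ) : ℝ :=
  ∫ z in Set.Ioi (0 : ℝ),
    gaussPdf d (μs + Real.sqrt (1 - ρ ^ 2) • (x - μs)) ((ρ ^ 2 * z) • Cs) x' *
      invGammaPdf (((d : ℝ) + ν) / 2) (2 / (ν + innerS d μs Cs x x)) z

lemma key_integral {s c : ℝ} (hs : 0 < s) (hc : 0 < c) :
    ∫ z in Set.Ioi (0:ℝ), z ^ (-s - 1) * Real.exp (-c / z) = Real.Gamma s * c ^ (-s) := by
  have h2 : ∫ y in Set.Ioi (0:ℝ), y ^ (s - 1) * Real.exp (-c * y)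
      = Real.Gamma s * c ^ (-s) := by
    have := integral_rpow_mul_exp_neg_mul_rpow (p := 1) (q := s - 1) (b := c)
      one_pos (by linarith) hc
    simp_rw [Real.rpow_one] at this
    rw [this]
    norm_num
    rw [mul_comm]
  rw [← h2, ← integral_comp_rpow_Ioi (fun t : ℝ => t ^ (s - 1) * Real.exp (-c * t))
    (p := (-1:ℝ)) (by norm_num)]
  refine setIntegral_congr_fun measurableSet_Ioi (fun z hz => ?_)
  have hz : (0:ℝ) < z := hz
  rw [smul_eq_mul, Real.rpow_neg_one]
  rw [Real.inv_rpow hz.le, ← Real.rpow_neg hz.le]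
  rw [show (-1:ℝ) - 1 = -2 by norm_num]
  rw [abs_neg, abs_one, one_mul, ← mul_assoc, ← Real.rpow_add hz,
    show (-2:ℝ) + -(s-1) = -s - 1 by ring, div_eq_mul_inv]

lemma dot_symm {d : ℕ} {M : Matrix (Fin d) (Fin d) ℝ} (hM : Mᵀ = M)
    (p q : Fin d → ℝ) : p ⬝ᵥ (M *ᵥ q) = q ⬝ᵥ (M *ᵥ p) := by
  rw [Matrix.dotProduct_mulVec, ← Matrix.mulVec_transpose, hM, dotProduct_comm]

lemma quad_expand {d : ℕ} (μs : Fin d → ℝ) (Cs : Matrix (Fin d) (Fin d) ℝ)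
    (hM : (Cs⁻¹)ᵀ = Cs⁻¹) (t : ℝ) (x x' : Fin d → ℝ) :
    (x' - (μs + t • (x - μs))) ⬝ᵥ (Cs⁻¹ *ᵥ (x' - (μs + t • (x - μs)))) =
      innerS d μs Cs x' x' + t ^ 2 * innerS d μs Cs x x
        - 2 * t * innerS d μs Cs x x' := by
  have h : x' - (μs + t • (x - μs)) = (x' - μs) - t • (x - μs) := by abel
  rw [h]
  unfold innerS
  set u := x' - μs
  set v := x - μs
  have hsym := dot_symm hM u v
  simp only [Matrix.mulVec_sub, Matrix.mulVec_smul, sub_dotProduct,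
    dotProduct_sub, dotProduct_smul, smul_dotProduct, smul_eq_mul]
  rw [hsym]
  ring

/-- Closed form of the tpCN proposal density: there is a normalizing constant `γ₁`
(depending only on `d`, `ν` and `C_s`) such that
`κ_t(x, x') = (γ₁/ρ^d)((d+ν)/(ν+⟨x,x⟩_s))^{d/2}
  [1 + (ρ²(ν+⟨x,x⟩_s))⁻¹(⟨x',x'⟩_s + (1−ρ²)⟨x,x⟩_s − 2√(1−ρ²)⟨x,x'⟩_s)]^{−(2d+ν)/2}`. -/
theorem tpCN_proposal_density (d : ℕ) (hd : 1 ≤ d) (ν : ℝ) (hν : 0 < ν)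
    (μs : Fin d → ℝ) (Cs : Matrix (Fin d) (Fin d) ℝ) (hCs : Cs.PosDef) :
    ∃ γ₁ : ℝ, 0 < γ₁ ∧ ∀ ρ : ℝ, ρ ∈ Set.Ioo (0 : ℝ) 1 → ∀ x x' : Fin d → ℝ,
      tpcnPdf d ν μs Cs ρ x x' =
        γ₁ / ρ ^ d * (((d : ℝ) + ν) / (ν + innerS d μs Cs x x)) ^ ((d : ℝ) / 2) *
          (1 + (ρ ^ 2 * (ν + innerS d μs Cs x x))⁻¹ *
              (innerS d μs Cs x' x' + (1 - ρ ^ 2) * innerS d μs Cs x x -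
                2 * Real.sqrt (1 - ρ ^ 2) * innerS d μs Cs x x')) ^
            (-((2 * (d : ℝ) + ν) / 2)) := by
  have hdet : 0 < Cs.det := hCs.det_pos
  have hInv : (Cs⁻¹).PosDef := hCs.inv
  have hM : (Cs⁻¹)ᵀ = Cs⁻¹ := by
    have := hInv.isHermitian
    rwa [Matrix.IsHermitian, Matrix.conjTranspose_eq_transpose_of_trivial] at this
  have hQ0 : ∀ y : Fin d → ℝ, 0 ≤ y ⬝ᵥ (Cs⁻¹ *ᵥ y) := by
    intro y
    have := hInv.posSemidef.dotProduct_mulVec_nonneg y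
    simpa using this
  set k : ℝ := ((d : ℝ) + ν) / 2 with hk
  set s : ℝ := (2 * (d : ℝ) + ν) / 2 with hs
  have hd0 : (0:ℝ) < (d:ℝ) := by exact_mod_cast Nat.lt_of_lt_of_le Nat.zero_lt_one hd
  have hkpos : 0 < k := by rw [hk]; positivity
  have hspos : 0 < s := by rw [hs]; positivity
  have hGk : 0 < Real.Gamma k := Real.Gamma_pos_of_pos hkpos
  have hGs : 0 < Real.Gamma s := Real.Gamma_pos_of_pos hspos
  have hA : 0 < (Real.sqrt ((2 * Real.pi) ^ d * Cs.det))⁻¹ := by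
    rw [inv_pos]
    apply Real.sqrt_pos.mpr
    positivity
  refine ⟨(Real.sqrt ((2 * Real.pi) ^ d * Cs.det))⁻¹ * (Real.Gamma s / Real.Gamma k)
    * 2 ^ ((d:ℝ)/2) * ((d:ℝ) + ν) ^ (-((d:ℝ)/2)), by positivity, ?_⟩
  intro ρ hρ x x'
  obtain ⟨hρ0, hρ1⟩ := hρ
  have hρ2 : (0:ℝ) < 1 - ρ ^ 2 := by nlinarith
  set a : ℝ := ν + innerS d μs Cs x x with ha
  have hxx : 0 ≤ innerS d μs Cs x x := hQ0 _
  have haPos : 0 < a := by rw [ha]; linarith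
  set Q : ℝ := innerS d μs Cs x' x' + (1 - ρ ^ 2) * innerS d μs Cs x x -
      2 * Real.sqrt (1 - ρ ^ 2) * innerS d μs Cs x x' with hQdef
  have hQeq : (x' - (μs + Real.sqrt (1 - ρ ^ 2) • (x - μs))) ⬝ᵥ
      (Cs⁻¹ *ᵥ (x' - (μs + Real.sqrt (1 - ρ ^ 2) • (x - μs)))) = Q := by
    rw [quad_expand μs Cs hM, Real.sq_sqrt hρ2.le, hQdef]
  have hQnn : 0 ≤ Q := hQeq ▸ hQ0 _
  set c : ℝ := (Q / ρ ^ 2 + a) / 2 with hc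
  have hcpos : 0 < c := by rw [hc]; positivity
  set A : ℝ := (Real.sqrt ((2 * Real.pi) ^ d * Cs.det))⁻¹ with hAdef
  set K : ℝ := A * (ρ ^ d)⁻¹ / (Real.Gamma k * (2 / a) ^ k) with hK
  have hθpos : (0:ℝ) < 2 / a := by positivity
  -- pointwise identity on Ioi 0
  have hpt : ∀ z ∈ Set.Ioi (0:ℝ),
      gaussPdf d (μs + Real.sqrt (1 - ρ ^ 2) • (x - μs)) ((ρ ^ 2 * z) • Cs) x' *
        invGammaPdf k (2 / a) z = K * (z ^ (-s - 1) * Real.exp (-c / z)) := by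
    intro z hz
    have hz : (0:ℝ) < z := hz
    have hρz : ρ ^ 2 * z ≠ 0 := by positivity
    unfold gaussPdf invGammaPdf
    rw [if_pos hz]
    have hdet2 : ((ρ ^ 2 * z) • Cs).det = (ρ ^ 2 * z) ^ d * Cs.det := by
      rw [Matrix.det_smul, Fintype.card_fin]
    have hinv2 : ((ρ ^ 2 * z) • Cs)⁻¹ = (ρ ^ 2 * z)⁻¹ • Cs⁻¹ := by
      haveI := invertibleOfNonzero hρz
      rw [Matrix.inv_smul (A := Cs) (ρ ^ 2 * z) hdet.ne'.isUnit, invOf_eq_inv _]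
    rw [hdet2, hinv2]
    rw [Matrix.smul_mulVec, dotProduct_smul, smul_eq_mul, hQeq]
    -- sqrt factor
    have hsqrt : Real.sqrt ((2 * Real.pi) ^ d * ((ρ ^ 2 * z) ^ d * Cs.det))
        = (Real.sqrt ((2 * Real.pi) ^ d * Cs.det)) * ρ ^ d * z ^ ((d:ℝ)/2) := by
      have hzd : Real.sqrt (z ^ d) = z ^ ((d:ℝ)/2) := by
        rw [Real.sqrt_eq_rpow, ← Real.rpow_natCast z d, ← Real.rpow_mul hz.le,
          mul_one_div]
      rw [show (2 * Real.pi) ^ d * ((ρ ^ 2 * z) ^ d * Cs.det)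
          = ((2 * Real.pi) ^ d * Cs.det) * ((ρ ^ d) ^ 2 * z ^ d) by ring]
      rw [Real.sqrt_mul (by positivity) ((ρ ^ d) ^ 2 * z ^ d),
        Real.sqrt_mul (by positivity) (z ^ d),
        Real.sqrt_sq (by positivity), hzd, mul_assoc]
    rw [hsqrt]
    -- exponentials
    have hexp : Real.exp (-(1 / 2) * ((ρ ^ 2 * z)⁻¹ * Q)) * Real.exp (-1 / (2 / a * z))
        = Real.exp (-c / z) := by
      rw [← Real.exp_add]
      congr 1
      rw [hc]
      field_simp
      ring
    have hzpow : (z ^ ((d:ℝ)/2))⁻¹ * z ^ (-(k+1)) = z ^ (-s - 1) := by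
      rw [← Real.rpow_neg hz.le, ← Real.rpow_add hz]
      congr 1
      rw [hs, hk]
      ring
    rw [hK]
    rw [show (Real.sqrt ((2 * Real.pi) ^ d * Cs.det) * ρ ^ d * z ^ ((d:ℝ)/2))⁻¹
        = A * (ρ ^ d)⁻¹ * (z ^ ((d:ℝ)/2))⁻¹ by rw [hAdef, mul_inv, mul_inv]]
    rw [← hzpow, ← hexp]
    ring
  unfold tpcnPdf
  rw [setIntegral_congr_fun measurableSet_Ioi hpt, MeasureTheory.integral_const_mul,
    key_integral hspos hcpos]
  -- now pure algebra
  have hfactor : c = (a / 2) * (1 + (ρ ^ 2 * a)⁻¹ * Q) := by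
    rw [hc]
    field_simp
    ring
  have hbase : (0:ℝ) ≤ 1 + (ρ ^ 2 * a)⁻¹ * Q := by positivity
  rw [hfactor, Real.mul_rpow (by positivity) hbase]
  have hθ : ((2 / a : ℝ)) ^ k = ((a / 2) ^ k)⁻¹ := by
    rw [show (2/a : ℝ) = (a/2)⁻¹ by rw [inv_div], Real.inv_rpow (by positivity)]
  have hks : (a / 2 : ℝ) ^ k * (a / 2) ^ (-s) = 2 ^ ((d:ℝ)/2) * (a ^ ((d:ℝ)/2))⁻¹ := by
    rw [← Real.rpow_add (by positivity), show k + (-s) = -((d:ℝ)/2) by rw [hk, hs]; ring,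
      Real.rpow_neg (by positivity), Real.div_rpow haPos.le (by norm_num), inv_div,
      div_eq_mul_inv]
  have hda : (((d:ℝ) + ν) / a) ^ ((d:ℝ)/2)
      = ((d:ℝ) + ν) ^ ((d:ℝ)/2) * (a ^ ((d:ℝ)/2))⁻¹ := by
    rw [Real.div_rpow (by positivity) haPos.le, div_eq_mul_inv]
  have hdd : ((d:ℝ) + ν) ^ (-((d:ℝ)/2)) * ((d:ℝ) + ν) ^ ((d:ℝ)/2) = 1 := by
    rw [← Real.rpow_add (by positivity)]
    norm_num
  have hks2 : (((2 / a):ℝ) ^ k)⁻¹ * (a / 2) ^ (-s) = 2 ^ ((d:ℝ)/2) * (a ^ ((d:ℝ)/2))⁻¹ := by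
    rw [hθ, inv_inv]; exact hks
  rw [hK, hda]
  linear_combination (A * (ρ ^ d)⁻¹ * (Real.Gamma k)⁻¹ * Real.Gamma s *
      (1 + (ρ ^ 2 * a)⁻¹ * Q) ^ (-s)) * hks2 -
    (A * (ρ ^ d)⁻¹ * (Real.Gamma k)⁻¹ * Real.Gamma s *
      (1 + (ρ ^ 2 * a)⁻¹ * Q) ^ (-s) * 2 ^ ((d:ℝ)/2) * (a ^ ((d:ℝ)/2))⁻¹) * hdd
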